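/- Let Γ be a 3-regular planar graph that is the one-skeleton of a 3-dimensional manifold with faces homeomorphic to the 3-disk D³. Then for every vertex p of Γ, the graph Γ \ {p} obtained by deleting p (and its incident edges) is connected. -/

import Mathlib

open SimpleGraph
set_option linter.unusedSectionVars false
set_option maxHeartbeats 1000000
variable {V : Type} [Fintype V] [DecidableEq V]

def delGraph (G : SimpleGraph V) (S : Set V) (p : V) : SimpleGraph V where
  Adj x y := x ∈ S ∧ y ∈ S ∧ x ≠ p ∧ y ≠ p ∧ G.Adj x y
  symm := by constructor; intro x y h; exact ⟨h.2.1, h.1, h.2.2.2.1, h.2.2.1, h.2.2.2.2.symm⟩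
  loopless := by constructor; intro x h; exact G.loopless.irrefl x h.2.2.2.2

lemma delGraph_adj {G : SimpleGraph V} {S : Set V} {p x y : V} :
    (delGraph G S p).Adj x y ↔ x ∈ S ∧ y ∈ S ∧ x ≠ p ∧ y ≠ p ∧ G.Adj x y := Iff.rfl

lemma delGraph_walk_mem {G : SimpleGraph V} {S : Set V} {p : V} :
    ∀ {u w : V}, (delGraph G S p).Walk u w → u ∈ S ∧ u ≠ p → w ∈ S ∧ w ≠ p := by
  intro u w q
  induction q with
  | nil => exact fun h => h
  | cons h' q' ih => exact fun _ => ih ⟨h'.2.1, h'.2.2.2.1⟩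

lemma induce_closed {G : SimpleGraph V} {S C : Set V}
    (hcl : ∀ x ∈ C, ∀ y ∈ S, G.Adj x y → y ∈ C) :
    ∀ {u w : ↥S}, (G.induce S).Walk u w → u.val ∈ C → w.val ∈ C := by
  intro u w q
  induction q with
  | nil => exact fun h => h
  | @cons u' m w' h' q' ih => exact fun h => ih (hcl _ h _ m.2 h')

lemma even_sum_adj (H : SimpleGraph V) [DecidableRel H.Adj] (A : Finset V) :
    Even (∑ w ∈ A, (A.filter (H.Adj w)).card) := by
  induction A using Finset.induction_on with
  | empty => simp
  | @insert x A hx ih =>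
    have h1 : ∀ w, (insert x A).filter (H.Adj w) =
        if H.Adj w x then insert x (A.filter (H.Adj w)) else A.filter (H.Adj w) := by
      intro w; rw [Finset.filter_insert]
    rw [Finset.sum_insert hx]
    have hxx : ¬ H.Adj x x := H.loopless.irrefl x
    have h2 : ((insert x A).filter (H.Adj x)).card = (A.filter (H.Adj x)).card := by
      rw [h1 x, if_neg hxx]
    have h3 : ∀ w ∈ A, ((insert x A).filter (H.Adj w)).card =
        (A.filter (H.Adj w)).card + (if H.Adj w x then 1 else 0) := by
      intro w _
      rw [h1 w]
      by_cases h : H.Adj w x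
      · rw [if_pos h, if_pos h,
          Finset.card_insert_of_notMem (fun hc => hx (Finset.mem_of_mem_filter _ hc))]
      · rw [if_neg h, if_neg h, Nat.add_zero]
    rw [h2, Finset.sum_congr rfl h3, Finset.sum_add_distrib, Finset.sum_boole]
    have h4 : (A.filter (fun w => H.Adj w x)).card = (A.filter (H.Adj x)).card := by
      congr 1
      apply Finset.filter_congr
      intro w _
      simp [H.adj_comm]
    rw [h4, Nat.cast_id]
    rcases ih with ⟨k, hk⟩
    exact ⟨(A.filter (H.Adj x)).card + k, by omega⟩


lemma delGraph_le {G : SimpleGraph V} {S T : Set V} {p : V} (h : S ⊆ T) :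
    delGraph G S p ≤ delGraph G T p := by
  intro x y hxy
  exact ⟨h hxy.1, h hxy.2.1, hxy.2.2.1, hxy.2.2.2.1, hxy.2.2.2.2⟩

lemma walk_to_induce {G H : SimpleGraph V} {T : Set V}
    (hH : ∀ a b, H.Adj a b → a ∈ T ∧ b ∈ T ∧ G.Adj a b) :
    ∀ {u w : V}, H.Walk u w → ∀ (hu : u ∈ T) (hw : w ∈ T),
      (G.induce T).Reachable ⟨u, hu⟩ ⟨w, hw⟩ := by
  intro u w q
  induction q with
  | nil => intro hu hw; exact Reachable.refl _
  | @cons u' m w' h' q' ih =>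
    intro hu hw
    exact Reachable.trans
      ((show (G.induce T).Adj ⟨u', hu⟩ ⟨m, (hH _ _ h').2.1⟩ from (hH _ _ h').2.2).reachable)
      (ih (hH _ _ h').2.1 hw)

lemma to_neighbor {G : SimpleGraph V} {p : V} :
    ∀ {v : V}, G.Walk v p → v ≠ p →
      ∃ x, G.Adj p x ∧ (delGraph G Set.univ p).Reachable v x := by
  intro v q
  induction q with
  | nil => exact fun h => absurd rfl h
  | @cons v' m e h' q' ih =>
    intro hv
    by_cases hm : m = e
    · subst hm; exact ⟨v', h'.symm, Reachable.refl _⟩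
    · obtain ⟨x, hx1, hx2⟩ := ih hm
      exact ⟨x, hx1, Reachable.trans
        (SimpleGraph.Adj.reachable ⟨trivial, trivial, hv, hm, h'⟩) hx2⟩

lemma cycle_lemma (G : SimpleGraph V) (S : Set V)
    (hconn : (G.induce S).Connected)
    (hval : ∀ v ∈ S, {w | w ∈ S ∧ G.Adj v w}.ncard = 2)
    (p : V) (hp : p ∈ S) {u w : V} (hu : u ∈ S) (hw : w ∈ S)
    (hup : u ≠ p) (hwp : w ≠ p) :
    (delGraph G S p).Reachable u w := by
  classical
  set H := delGraph G S p with hH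
  obtain ⟨a, b, hab, hNab⟩ := Set.ncard_eq_two.mp (hval p hp)
  have haS : a ∈ S ∧ G.Adj p a := by
    have : a ∈ ({a, b} : Set V) := by simp
    rw [← hNab] at this; exact this
  have hbS : b ∈ S ∧ G.Adj p b := by
    have : b ∈ ({a, b} : Set V) := by simp
    rw [← hNab] at this; exact this
  have hap : a ≠ p := fun h => G.loopless.irrefl p (h ▸ haS.2)
  have hbp : b ≠ p := fun h => G.loopless.irrefl p (h ▸ hbS.2)
  have hmem : ∀ x, x ∈ S → (G.Adj x p ↔ (x = a ∨ x = b)) := by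
    intro x hxS
    constructor
    · intro hxp
      have : x ∈ {w | w ∈ S ∧ G.Adj p w} := ⟨hxS, hxp.symm⟩
      rw [hNab] at this
      simpa using this
    · rintro (rfl | rfl)
      · exact haS.2.symm
      · exact hbS.2.symm
  -- every vertex of S \ {p} reaches a or b
  have reachab : ∀ v, v ∈ S → v ≠ p → (H.Reachable v a ∨ H.Reachable v b) := by
    intro v hv hvp
    by_contra hcon
    push_neg at hcon
    set C : Set V := {x | H.Reachable v x} with hC
    have hCmem : ∀ x ∈ C, x ∈ S ∧ x ≠ p := by
      intro x hx
      obtain ⟨q⟩ := hx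
      exact delGraph_walk_mem q ⟨hv, hvp⟩
    have hcl : ∀ x ∈ C, ∀ y ∈ S, G.Adj x y → y ∈ C := by
      intro x hx y hy hxy
      by_cases hyp : y = p
      · subst hyp
        rcases (hmem x (hCmem x hx).1).mp hxy with rfl | rfl
        · exact absurd hx hcon.1
        · exact absurd hx hcon.2
      · exact Reachable.trans hx
          (SimpleGraph.Adj.reachable ⟨(hCmem x hx).1, hy, (hCmem x hx).2, hyp, hxy⟩)
    have hvC : v ∈ C := Reachable.refl v
    obtain ⟨q⟩ := hconn.preconnected ⟨v, hv⟩ ⟨p, hp⟩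
    have hpC : p ∈ C := induce_closed hcl q hvC
    exact (hCmem p hpC).2 rfl
  -- a and b are connected in H (parity argument)
  have hABreach : H.Reachable a b := by
    by_contra hnab
    set Cfin : Finset V := Finset.univ.filter (fun x => H.Reachable a x) with hCfin
    have haC : a ∈ Cfin := by simp only [hCfin, Finset.mem_filter, Finset.mem_univ, true_and]; exact Reachable.refl a
    have hbC : b ∉ Cfin := by simp only [hCfin, Finset.mem_filter, Finset.mem_univ, true_and]; exact hnab
    have hmemC : ∀ x ∈ Cfin, x ∈ S ∧ x ≠ p := by
      intro x hx
      rw [hCfin, Finset.mem_filter] at hx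
      obtain ⟨q⟩ := hx.2
      exact delGraph_walk_mem q ⟨haS.1, hap⟩
    have hclosed : ∀ x ∈ Cfin, Cfin.filter (H.Adj x) = Finset.univ.filter (H.Adj x) := by
      intro x hx
      rw [hCfin, Finset.mem_filter] at hx
      ext y
      simp only [hCfin, Finset.mem_filter, Finset.mem_univ, true_and]
      constructor
      · exact fun h => h.2
      · exact fun h => ⟨hx.2.trans (SimpleGraph.Adj.reachable h), h⟩
    have hdeg : ∀ x ∈ Cfin, (Finset.univ.filter (H.Adj x)).card = if x = a then 1 else 2 := by
      intro x hx
      obtain ⟨hxS, hxp⟩ := hmemC x hx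
      have hset : {y | H.Adj x y} = {y | y ∈ S ∧ G.Adj x y} \ {p} := by
        ext y
        simp only [hH, delGraph_adj, Set.mem_setOf_eq, Set.mem_diff, Set.mem_singleton_iff]
        constructor
        · exact fun h => ⟨⟨h.2.1, h.2.2.2.2⟩, h.2.2.2.1⟩
        · exact fun h => ⟨hxS, h.1.1, hxp, h.2, h.1.2⟩
      have hcard : (Finset.univ.filter (H.Adj x)).card = {y | H.Adj x y}.ncard := by
        rw [Set.ncard_eq_toFinset_card', Set.toFinset_setOf]
      rw [hcard, hset]
      by_cases hxa : x = a
      · subst hxa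
        rw [if_pos rfl]
        have hpmem : p ∈ {y | y ∈ S ∧ G.Adj x y} := ⟨hp, haS.2.symm⟩
        rw [Set.ncard_diff_singleton_of_mem hpmem, hval x hxS]
      · have hxb : x ≠ b := fun h => hbC (h ▸ hx)
        rw [if_neg hxa]
        have hpnot : p ∉ {y | y ∈ S ∧ G.Adj x y} := by
          intro hpm
          rcases (hmem x hxS).mp hpm.2 with rfl | rfl
          · exact hxa rfl
          · exact hxb rfl
        rw [Set.diff_singleton_eq_self hpnot, hval x hxS]
    have heven := even_sum_adj H Cfin
    rw [Finset.sum_congr rfl (fun x hx => by rw [hclosed x hx, hdeg x hx])] at heven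
    have hsum : ∑ x ∈ Cfin, (if x = a then 1 else 2) = 1 + 2 * (Cfin.card - 1) := by
      rw [← Finset.add_sum_erase _ _ haC, if_pos rfl]
      congr 1
      rw [Finset.sum_congr rfl (fun x hx => if_neg (Finset.ne_of_mem_erase hx)),
        Finset.sum_const, Finset.card_erase_of_mem haC, smul_eq_mul, Nat.mul_comm]
    rw [hsum] at heven
    have hpos : 1 ≤ Cfin.card := Finset.card_pos.mpr ⟨a, haC⟩
    rcases heven with ⟨k, hk⟩
    omega
  rcases reachab u hu hup with h1 | h1 <;> rcases reachab w hw hwp with h2 | h2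
  · exact h1.trans h2.symm
  · exact h1.trans (hABreach.trans h2.symm)
  · exact h1.trans (hABreach.symm.trans h2.symm)
  · exact h1.trans h2.symm




/-- Combinatorial data of the one-skeleton `Γ` of a 3-dimensional manifold with faces `Q`
homeomorphic to the 3-disk `D³`.  `Γ` is a 3-regular graph embedded in the boundary
2-sphere `∂Q = S²` (hence planar, which is recorded by Euler's formula for the embedding),
`Facets` is the set of facets of `Q`, each facet being a cycle (connected 2-valent
subgraph) recorded by its vertex set; every vertex lies on exactly 3 facets, every edge
on exactly 2 facets, and the niceness of `Q` forces any two distinct facets to meet in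
at most a vertex or an edge. -/
structure DiskFaceGraph (V : Type) [Fintype V] [DecidableEq V] where
  G : SimpleGraph V
  regular : ∀ v : V, {w : V | G.Adj v w}.ncard = 3
  connected : G.Connected
  Facets : Finset (Finset V)
  facet_card : ∀ F ∈ Facets, 3 ≤ F.card
  facet_conn : ∀ F ∈ Facets, (G.induce (F : Set V)).Connected
  facet_two_valent : ∀ F ∈ Facets, ∀ v ∈ F, {w : V | w ∈ F ∧ G.Adj v w}.ncard = 2
  vertex_facets : ∀ v : V, {F ∈ Facets | v ∈ F}.card = 3
  edge_facets : ∀ v w : V, G.Adj v w → {F ∈ Facets | v ∈ F ∧ w ∈ F}.card = 2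
  nice : ∀ F₁ ∈ Facets, ∀ F₂ ∈ Facets, F₁ ≠ F₂ →
    (F₁ ∩ F₂).card ≤ 2 ∧ ∀ v ∈ F₁ ∩ F₂, ∀ w ∈ F₁ ∩ F₂, v ≠ w → G.Adj v w
  euler : (Fintype.card V : ℤ) - (G.edgeSet.ncard : ℤ) + (Facets.card : ℤ) = 2

/-- if `Γ` is the (3-regular, planar) one-skeleton of a 3-dimensional
manifold with faces homeomorphic to `D³`, then for every vertex `p` the graph
`Γ \ {p}` obtained by deleting `p` and its incident edges is connected. -/
theorem stmt0 {V : Type} [Fintype V] [DecidableEq V] (D : DiskFaceGraph V) :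
    ∀ p : V, (D.G.induce {v : V | v ≠ p}).Connected := by
  intro p
  classical
  set G := D.G with hG
  have hNp : {w : V | G.Adj p w}.ncard = 3 := D.regular p
  have hNne : {w : V | G.Adj p w}.Nonempty :=
    Set.nonempty_of_ncard_ne_zero (by rw [hNp]; omega)
  obtain ⟨a₀, ha₀⟩ := hNne
  set K := delGraph G Set.univ p with hK
  have pair : ∀ x y, G.Adj p x → G.Adj p y → K.Reachable x y := by
    intro x y hx hy
    by_cases hxy : x = y
    · subst hxy; exact Reachable.refl _
    have hfacet : ∃ F ∈ D.Facets, p ∈ F ∧ x ∈ F ∧ y ∈ F := by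
      by_contra hno
      push_neg at hno
      set N := {w : V | G.Adj p w} with hN
      have hxyN : ({x, y} : Set V) ⊆ N := by
        rintro z (rfl | rfl)
        · exact hx
        · exact hy
      have hd : (N \ {x, y}).ncard = 1 := by
        rw [Set.ncard_diff hxyN, Set.ncard_pair hxy, hNp]
      obtain ⟨c, hc⟩ := Set.ncard_eq_one.mp hd
      have hcmem : c ∈ N \ ({x, y} : Set V) := by rw [hc]; simp
      have hcx : c ≠ x := fun h => hcmem.2 (by simp [h])
      have hcy : c ≠ y := fun h => hcmem.2 (by simp [h])
      have hcadj : G.Adj p c := hcmem.1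
      have hother : ∀ z F, F ∈ D.Facets → p ∈ F → z ∈ F → G.Adj p z → z ≠ x → z ≠ y →
          c ∈ F := by
        intro z F hFf hpF hzF hz hzx hzy
        have hzc : z ∈ N \ ({x, y} : Set V) := ⟨hz, by simp [hzx, hzy]⟩
        rw [hc] at hzc
        simp only [Set.mem_singleton_iff] at hzc
        exact hzc ▸ hzF
      have hSc : ∀ F ∈ D.Facets, p ∈ F → (x ∈ F ∨ y ∈ F) → c ∈ F := by
        intro F hFf hpF hor
        have h2v := D.facet_two_valent F hFf p hpF
        obtain ⟨s1, s2, hs12, hset⟩ := Set.ncard_eq_two.mp h2v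
        rcases hor with hxF | hyF
        · have hxin : x ∈ ({s1, s2} : Set V) := by
            rw [← hset]; exact ⟨hxF, hx⟩
          have : ∃ z, z ∈ ({s1, s2} : Set V) ∧ z ≠ x := by
            rcases hxin with rfl | rfl
            · exact ⟨s2, by simp, fun h => hs12 h.symm⟩
            · exact ⟨s1, by simp, fun h => hs12 h⟩
          obtain ⟨z, hzin, hzx⟩ := this
          have hzF : z ∈ F ∧ G.Adj p z := by rw [← hset] at hzin; exact hzin
          have hzy : z ≠ y := fun h => hno F hFf hpF hxF (h ▸ hzF.1)
          exact hother z F hFf hpF hzF.1 hzF.2 hzx hzy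
        · have hyin : y ∈ ({s1, s2} : Set V) := by
            rw [← hset]; exact ⟨hyF, hy⟩
          have : ∃ z, z ∈ ({s1, s2} : Set V) ∧ z ≠ y := by
            rcases hyin with rfl | rfl
            · exact ⟨s2, by simp, fun h => hs12 h.symm⟩
            · exact ⟨s1, by simp, fun h => hs12 h⟩
          obtain ⟨z, hzin, hzy⟩ := this
          have hzF : z ∈ F ∧ G.Adj p z := by rw [← hset] at hzin; exact hzin
          have hzx : z ≠ x := fun h => hno F hFf hpF (h ▸ hzF.1) hyF
          exact hother z F hFf hpF hzF.1 hzF.2 hzx hzy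
      have hSxcard : {F ∈ D.Facets | p ∈ F ∧ x ∈ F}.card = 2 := D.edge_facets p x hx
      have hSycard : {F ∈ D.Facets | p ∈ F ∧ y ∈ F}.card = 2 := D.edge_facets p y hy
      have hSccard : {F ∈ D.Facets | p ∈ F ∧ c ∈ F}.card = 2 := D.edge_facets p c hcadj
      have hsubx : {F ∈ D.Facets | p ∈ F ∧ x ∈ F} ⊆ {F ∈ D.Facets | p ∈ F ∧ c ∈ F} := by
        intro F hF
        rw [Finset.mem_filter] at hF ⊢
        exact ⟨hF.1, hF.2.1, hSc F hF.1 hF.2.1 (Or.inl hF.2.2)⟩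
      have hsuby : {F ∈ D.Facets | p ∈ F ∧ y ∈ F} ⊆ {F ∈ D.Facets | p ∈ F ∧ c ∈ F} := by
        intro F hF
        rw [Finset.mem_filter] at hF ⊢
        exact ⟨hF.1, hF.2.1, hSc F hF.1 hF.2.1 (Or.inr hF.2.2)⟩
      have hdisj : Disjoint {F ∈ D.Facets | p ∈ F ∧ x ∈ F} {F ∈ D.Facets | p ∈ F ∧ y ∈ F} := by
        rw [Finset.disjoint_left]
        intro F hF1 hF2
        rw [Finset.mem_filter] at hF1 hF2
        exact hno F hF1.1 hF1.2.1 hF1.2.2 hF2.2.2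
      have hle : 4 ≤ ({F ∈ D.Facets | p ∈ F ∧ c ∈ F} : Finset (Finset V)).card := by
        calc (4 : ℕ) = {F ∈ D.Facets | p ∈ F ∧ x ∈ F}.card
            + {F ∈ D.Facets | p ∈ F ∧ y ∈ F}.card := by rw [hSxcard, hSycard]
          _ = ({F ∈ D.Facets | p ∈ F ∧ x ∈ F} ∪ {F ∈ D.Facets | p ∈ F ∧ y ∈ F}).card :=
              (Finset.card_union_of_disjoint hdisj).symm
          _ ≤ _ := Finset.card_le_card (Finset.union_subset hsubx hsuby)
      omega
    obtain ⟨F, hFf, hpF, hxF, hyF⟩ := hfacet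
    have hval : ∀ v ∈ (↑F : Set V), {w | w ∈ (↑F : Set V) ∧ G.Adj v w}.ncard = 2 := by
      intro v hv
      exact D.facet_two_valent F hFf v hv
    have hr := cycle_lemma G (↑F) (D.facet_conn F hFf) hval p hpF
      (u := x) (w := y) hxF hyF hx.ne' hy.ne'
    exact hr.mono (delGraph_le (fun z _ => trivial))
  have reach_nb : ∀ v : V, v ≠ p → ∃ x, G.Adj p x ∧ K.Reachable v x := by
    intro v hv
    obtain ⟨q⟩ := D.connected.preconnected v p
    exact to_neighbor q hv
  rw [SimpleGraph.connected_iff]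
  constructor
  · rintro ⟨v, hv⟩ ⟨w, hw⟩
    obtain ⟨x, hx, hvx⟩ := reach_nb v hv
    obtain ⟨y, hy, hwy⟩ := reach_nb w hw
    obtain ⟨q⟩ := hvx.trans ((pair x y hx hy).trans hwy.symm)
    exact walk_to_induce (H := K) (T := {v : V | v ≠ p})
      (fun a b hab => ⟨hab.2.2.1, hab.2.2.2.1, hab.2.2.2.2⟩) q hv hw
  · exact ⟨⟨a₀, ha₀.ne'⟩⟩
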